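/- In ℂ[[x,y]], let I = (x² − xy + y², x²y + xy²) and let J be the ideal generated by all elements a₁² + a₂² + a₃² where aᵢ ∈ (hᵢ) for h₁ = −x, h₂ = y, h₃ = x − y, and a₁ + a₂ + a₃ = 0. Then I = J. Moreover, I contains (x,y)⁴. -/

import Mathlib

noncomputable section

def px : MvPowerSeries (Fin 2) ℂ := MvPowerSeries.X 0
def py : MvPowerSeries (Fin 2) ℂ := MvPowerSeries.X 1

lemma px_ne_zero : px ≠ 0 := by
  intro h
  have h1 : (MvPowerSeries.coeff (Finsupp.single (0:Fin 2) 1)) px = 1 := by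
    simp [px, MvPowerSeries.coeff_X]
  rw [h, map_zero] at h1
  exact one_ne_zero (α := ℂ) h1.symm

open MvPowerSeries in
lemma key {p q : MvPowerSeries (Fin 2) ℂ} (h : p * px = q * py) :
    ∃ t, p = t * py ∧ q = t * px := by
  have hXdvd : (X 0 : MvPowerSeries (Fin 2) ℂ) ∣ q := by
    rw [X_dvd_iff]
    intro m hm
    have h1 : coeff (m + Finsupp.single 1 1) (q * py) = coeff m q := by
      rw [py, X, coeff_add_mul_monomial, mul_one]
    have h2 : coeff (m + Finsupp.single 1 1) (p * px) = 0 := by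
      have hd : (X 0 : MvPowerSeries (Fin 2) ℂ) ∣ p * px := ⟨p, by rw [px]; ring⟩
      exact X_dvd_iff.mp hd _ (by simp [hm])
    rw [← h1, ← h, h2]
  obtain ⟨t, ht⟩ := hXdvd
  refine ⟨t, ?_, by rw [ht, px, mul_comm]⟩
  have hq : q = t * px := by rw [ht, px, mul_comm]
  have : p * px = t * py * px := by rw [h, hq]; ring
  exact mul_right_cancel₀ px_ne_zero this

lemma unit_cancel {c : ℂ} (hc : c ≠ 0) {Id : Ideal (MvPowerSeries (Fin 2) ℂ)}
    {f : MvPowerSeries (Fin 2) ℂ}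
    (h : (MvPowerSeries.C (σ := Fin 2) (R := ℂ) c) * f ∈ Id) : f ∈ Id := by
  have : f = MvPowerSeries.C (σ := Fin 2) (R := ℂ) c⁻¹ * (MvPowerSeries.C (σ := Fin 2) (R := ℂ) c * f) := by
    rw [← mul_assoc, ← map_mul, inv_mul_cancel₀ hc, map_one, one_mul]
  rw [this]
  exact Ideal.mul_mem_left _ _ h

lemma memI {f : MvPowerSeries (Fin 2) ℂ} (u v : MvPowerSeries (Fin 2) ℂ) (c : ℂ) (hc : c ≠ 0)
    (h : MvPowerSeries.C (σ := Fin 2) (R := ℂ) c * f =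
      u * (px ^ 2 - px * py + py ^ 2) + v * (px ^ 2 * py + px * py ^ 2)) :
    f ∈ Ideal.span {px ^ 2 - px * py + py ^ 2, px ^ 2 * py + px * py ^ 2} :=
  unit_cancel hc (Ideal.mem_span_pair.mpr ⟨u, v, h.symm⟩)

lemma hC3 : MvPowerSeries.C (σ := Fin 2) (R := ℂ) 3 = (3 : MvPowerSeries (Fin 2) ℂ) := map_ofNat _ 3

lemma hx4 : px^4 ∈ Ideal.span {px ^ 2 - px * py + py ^ 2, px ^ 2 * py + px * py ^ 2} :=
  memI (3*px^2+2*px*py) (px-2*py) 3 (by norm_num) (by rw [hC3]; ring)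

lemma hx3y : px^3*py ∈ Ideal.span {px ^ 2 - px * py + py ^ 2, px ^ 2 * py + px * py ^ 2} :=
  memI (px*py) (2*px-py) 3 (by norm_num) (by rw [hC3]; ring)

lemma hx2y2 : px^2*py^2 ∈ Ideal.span {px ^ 2 - px * py + py ^ 2, px ^ 2 * py + px * py ^ 2} :=
  memI (-(px*py)) (px+py) 3 (by norm_num) (by rw [hC3]; ring)

lemma hxy3 : px*py^3 ∈ Ideal.span {px ^ 2 - px * py + py ^ 2, px ^ 2 * py + px * py ^ 2} :=
  memI (px*py) (2*py-px) 3 (by norm_num) (by rw [hC3]; ring)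

lemma hy4 : py^4 ∈ Ideal.span {px ^ 2 - px * py + py ^ 2, px ^ 2 * py + px * py ^ 2} :=
  memI (3*py^2+2*px*py) (py-2*px) 3 (by norm_num) (by rw [hC3]; ring)

end

noncomputable section

open scoped Pointwise

def S : Set (MvPowerSeries (Fin 2) ℂ) := {px, py}

lemma hpow4 : (Ideal.span {px, py}) ^ 4 ≤
    Ideal.span {px ^ 2 - px * py + py ^ 2, px ^ 2 * py + px * py ^ 2} := by
  have hS : Ideal.span {px, py} = Ideal.span S := rfl
  have h4 : (Ideal.span {px, py}) ^ 4 =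
      Ideal.span (S * S * S * S) := by
    rw [hS, show (4:ℕ) = 1+1+1+1 from rfl, pow_add, pow_add, pow_add, pow_one,
      Ideal.span_mul_span', Ideal.span_mul_span', Ideal.span_mul_span']
  rw [h4, Ideal.span_le]
  rintro z ⟨w2, ⟨w1, ⟨c1, hc1, d1, hd1, rfl⟩, d2, hd2, rfl⟩, d3, hd3, rfl⟩
  simp only [S, Set.mem_insert_iff, Set.mem_singleton_iff] at hc1 hd1 hd2 hd3
  rcases hc1 with rfl|rfl <;> rcases hd1 with rfl|rfl <;> rcases hd2 with rfl|rfl <;>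
    rcases hd3 with rfl|rfl <;> beta_reduce <;> rw [SetLike.mem_coe] <;>
  first
    | (rw [show px*px*px*px = px^4 from by ring]; exact hx4)
    | (rw [show px*px*px*py = px^3*py from by ring]; exact hx3y)
    | (rw [show px*px*py*px = px^3*py from by ring]; exact hx3y)
    | (rw [show px*py*px*px = px^3*py from by ring]; exact hx3y)
    | (rw [show py*px*px*px = px^3*py from by ring]; exact hx3y)
    | (rw [show px*px*py*py = px^2*py^2 from by ring]; exact hx2y2)
    | (rw [show px*py*px*py = px^2*py^2 from by ring]; exact hx2y2)
    | (rw [show px*py*py*px = px^2*py^2 from by ring]; exact hx2y2)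
    | (rw [show py*px*px*py = px^2*py^2 from by ring]; exact hx2y2)
    | (rw [show py*px*py*px = px^2*py^2 from by ring]; exact hx2y2)
    | (rw [show py*py*px*px = px^2*py^2 from by ring]; exact hx2y2)
    | (rw [show px*py*py*py = px*py^3 from by ring]; exact hxy3)
    | (rw [show py*px*py*py = px*py^3 from by ring]; exact hxy3)
    | (rw [show py*py*px*py = px*py^3 from by ring]; exact hxy3)
    | (rw [show py*py*py*px = px*py^3 from by ring]; exact hxy3)
    | (rw [show py*py*py*py = py^4 from by ring]; exact hy4)

end

noncomputable section

/-- In `ℂ[[x,y]]`, the ideal `I = (x² − xy + y², x²y + xy²)` equals the ideal `J`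
generated by all `a₁² + a₂² + a₃²` with `aᵢ ∈ (hᵢ)` for `h₁ = −x`, `h₂ = y`,
`h₃ = x − y` and `a₁ + a₂ + a₃ = 0`; moreover `I` contains `(x,y)⁴`. -/
theorem stmt_13 :
    Ideal.span {px ^ 2 - px * py + py ^ 2, px ^ 2 * py + px * py ^ 2} =
        Ideal.span {w : MvPowerSeries (Fin 2) ℂ | ∃ a1 a2 a3 : MvPowerSeries (Fin 2) ℂ,
          a1 ∈ Ideal.span {-px} ∧ a2 ∈ Ideal.span {py} ∧ a3 ∈ Ideal.span {px - py} ∧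
          a1 + a2 + a3 = 0 ∧ w = a1 ^ 2 + a2 ^ 2 + a3 ^ 2} ∧
      (Ideal.span {px, py}) ^ 4 ≤
        Ideal.span {px ^ 2 - px * py + py ^ 2, px ^ 2 * py + px * py ^ 2} := by
  refine ⟨le_antisymm ?_ ?_, hpow4⟩
  · -- I ≤ J
    rw [Ideal.span_le]
    rintro z (rfl | rfl)
    · -- g1 ∈ J
      refine unit_cancel (c := 2) (by norm_num) ?_
      have hw0 : ((-px)^2 + py^2 + (px-py)^2 : MvPowerSeries (Fin 2) ℂ) ∈
          {w : MvPowerSeries (Fin 2) ℂ | ∃ a1 a2 a3 : MvPowerSeries (Fin 2) ℂ,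
          a1 ∈ Ideal.span {-px} ∧ a2 ∈ Ideal.span {py} ∧ a3 ∈ Ideal.span {px - py} ∧
          a1 + a2 + a3 = 0 ∧ w = a1 ^ 2 + a2 ^ 2 + a3 ^ 2} :=
        ⟨-px, py, px - py, Ideal.mem_span_singleton_self _, Ideal.mem_span_singleton_self _,
          Ideal.mem_span_singleton_self _, by ring, rfl⟩
      have heq : MvPowerSeries.C (σ := Fin 2) (R := ℂ) 2 * (px ^ 2 - px * py + py ^ 2) =
          (-px)^2 + py^2 + (px-py)^2 := by rw [map_ofNat]; ring
      rw [heq]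
      exact Ideal.subset_span hw0
    · -- g2 ∈ J
      refine unit_cancel (c := 4) (by norm_num) ?_
      set J := Ideal.span {w : MvPowerSeries (Fin 2) ℂ | ∃ a1 a2 a3 : MvPowerSeries (Fin 2) ℂ,
          a1 ∈ Ideal.span {-px} ∧ a2 ∈ Ideal.span {py} ∧ a3 ∈ Ideal.span {px - py} ∧
          a1 + a2 + a3 = 0 ∧ w = a1 ^ 2 + a2 ^ 2 + a3 ^ 2} with hJ
      have hw1 : (((1-py)*(-px))^2 + ((1-px)*py)^2 + (px-py)^2 : MvPowerSeries (Fin 2) ℂ) ∈ J := by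
        refine Ideal.subset_span ⟨(1-py)*(-px), (1-px)*py, px - py,
          Ideal.mem_span_singleton'.mpr ⟨1-py, rfl⟩, Ideal.mem_span_singleton'.mpr ⟨1-px, rfl⟩,
          Ideal.mem_span_singleton_self _, by ring, rfl⟩
      have hw2 : (((1+py)*(-px))^2 + ((1+px)*py)^2 + (px-py)^2 : MvPowerSeries (Fin 2) ℂ) ∈ J := by
        refine Ideal.subset_span ⟨(1+py)*(-px), (1+px)*py, px - py,
          Ideal.mem_span_singleton'.mpr ⟨1+py, rfl⟩, Ideal.mem_span_singleton'.mpr ⟨1+px, rfl⟩,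
          Ideal.mem_span_singleton_self _, by ring, rfl⟩
      have heq : MvPowerSeries.C (σ := Fin 2) (R := ℂ) 4 * (px ^ 2 * py + px * py ^ 2) =
          (((1+py)*(-px))^2 + ((1+px)*py)^2 + (px-py)^2) -
          (((1-py)*(-px))^2 + ((1-px)*py)^2 + (px-py)^2) := by rw [map_ofNat]; ring
      rw [heq]
      exact Ideal.sub_mem _ hw2 hw1
  · -- J ≤ I
    rw [Ideal.span_le]
    rintro w ⟨a1, a2, a3, h1, h2, h3, hsum, rfl⟩
    obtain ⟨u1, e1⟩ := Ideal.mem_span_singleton'.mp h1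
    obtain ⟨u2, e2⟩ := Ideal.mem_span_singleton'.mp h2
    obtain ⟨u3, e3⟩ := Ideal.mem_span_singleton'.mp h3
    have hkey : (u3 - u1) * px = (u3 - u2) * py := by
      linear_combination e1 + e2 + e3 + hsum
    obtain ⟨t, ht1, ht2⟩ := key hkey
    rw [SetLike.mem_coe]
    have hu1 : u1 = u3 - t * py := by linear_combination -ht1
    have hu2 : u2 = u3 - t * px := by linear_combination -ht2
    have hw : a1 ^ 2 + a2 ^ 2 + a3 ^ 2 =
        (2 * u3 ^ 2) * (px ^ 2 - px * py + py ^ 2) +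
        (-(2 * u3 * t)) * (px ^ 2 * py + px * py ^ 2) +
        (2 * t ^ 2) * (px ^ 2 * py ^ 2) := by
      rw [← e1, ← e2, ← e3, hu1, hu2]; ring
    rw [hw]
    have hg1 : (px ^ 2 - px * py + py ^ 2 : MvPowerSeries (Fin 2) ℂ) ∈
        Ideal.span {px ^ 2 - px * py + py ^ 2, px ^ 2 * py + px * py ^ 2} :=
      Ideal.subset_span (Set.mem_insert _ _)
    have hg2 : (px ^ 2 * py + px * py ^ 2 : MvPowerSeries (Fin 2) ℂ) ∈
        Ideal.span {px ^ 2 - px * py + py ^ 2, px ^ 2 * py + px * py ^ 2} :=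
      Ideal.subset_span (Set.mem_insert_of_mem _ rfl)
    exact add_mem (add_mem (Ideal.mul_mem_left _ _ hg1) (Ideal.mul_mem_left _ _ hg2))
      (Ideal.mul_mem_left _ _ hx2y2)

end
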